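/- Let k ≥ 3 and α ∈ 𝔽_{2^k}. If the Kloosterman sum Σ_{x ∈ 𝔽_{2^k}^*} (−1)^{Tr^k_1(α x + x^{−1})} equals −1, then Tr^k_1(α) = 0. -/

import Mathlib

noncomputable instance (n : ℕ) : Fintype (GaloisField 2 n) := Fintype.ofFinite _
noncomputable instance (n : ℕ) : DecidableEq (GaloisField 2 n) := Classical.decEq _

namespace Klo

variable {k : ℕ}

noncomputable def tr {k : ℕ} (x : GaloisField 2 k) : ZMod 2 :=
  Algebra.trace (ZMod 2) (GaloisField 2 k) x

lemma card_F (hk : k ≠ 0) : Fintype.card (GaloisField 2 k) = 2 ^ k := by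
  have := GaloisField.card 2 k hk
  simpa [Nat.card_eq_fintype_card] using this

lemma zmod2_cases (a : ZMod 2) : a = 0 ∨ a = 1 := by revert a; decide

noncomputable def frobAlg (k : ℕ) : GaloisField 2 k ≃ₐ[ZMod 2] GaloisField 2 k :=
  AlgEquiv.ofRingEquiv (f := (frobeniusEquiv (GaloisField 2 k) 2)) (by
    intro c
    have hc : c ^ 2 = c := by revert c; decide
    show (algebraMap (ZMod 2) (GaloisField 2 k) c) ^ 2 = algebraMap (ZMod 2) (GaloisField 2 k) c
    rw [← map_pow, hc])

lemma tr_sq (u : GaloisField 2 k) : tr (u ^ 2) = tr u := by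
  have := Algebra.trace_eq_of_algEquiv (frobAlg k) u
  simpa [tr, frobAlg, frobeniusEquiv_def, frobenius_def] using this

lemma sq_bijective : Function.Bijective (fun x : GaloisField 2 k => x ^ 2) := by
  have h1 : Function.Injective (fun x : GaloisField 2 k => x ^ 2) := by
    intro a b hab
    simpa using frobenius_inj (GaloisField 2 k) 2 (by simpa [frobenius_def] using hab)
  exact ⟨h1, Finite.surjective_of_injective h1⟩

lemma tr_surj : ∃ b : GaloisField 2 k, tr b = 1 := by
  by_contra hc
  push_neg at hc
  have h0 : ∀ y : GaloisField 2 k, tr y = 0 := fun y =>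
    (zmod2_cases (tr y)).resolve_right (hc y)
  have := (traceForm_nondegenerate (ZMod 2) (GaloisField 2 k)).1 1 ?_
  · exact one_ne_zero this
  · intro y
    simpa [Algebra.traceForm_apply, tr] using h0 y

open Finset

/-- kernel of trace as a finset -/
noncomputable def ker0 (k : ℕ) : Finset (GaloisField 2 k) := univ.filter (fun w => tr w = 0)

lemma card_ker0 (hk : k ≠ 0) : (ker0 k).card = 2 ^ (k - 1) := by
  obtain ⟨b, hb⟩ := tr_surj (k := k)
  have heq : (univ.filter (fun w : GaloisField 2 k => ¬ tr w = 0))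
      = univ.filter (fun w : GaloisField 2 k => tr w = 1) := by
    apply Finset.filter_congr
    intro x _
    constructor
    · intro hx; exact (zmod2_cases (tr x)).resolve_left hx
    · intro hx; rw [hx]; exact one_ne_zero
  have hsplit : (ker0 k).card + (univ.filter (fun w : GaloisField 2 k => tr w = 1)).card
      = Fintype.card (GaloisField 2 k) := by
    rw [← heq, ← Finset.card_univ]
    exact Finset.card_filter_add_card_filter_not (s := univ) (fun w => tr w = 0)
  have hbij : (ker0 k).card = (univ.filter (fun w : GaloisField 2 k => tr w = 1)).card := by
    apply Finset.card_bij (fun w _ => w + b)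
    · intro w hw
      simp only [ker0, mem_filter, mem_univ, true_and] at hw ⊢
      have : tr (w + b) = tr w + tr b := map_add _ _ _
      rw [this, hw, hb, zero_add]
    · intro w hw w' hw' hww'
      exact add_right_cancel hww'
    · intro w hw
      refine ⟨w + b, ?_, by rw [add_assoc, CharTwo.add_self_eq_zero, add_zero]⟩
      simp only [ker0, mem_filter, mem_univ, true_and] at hw ⊢
      have : tr (w + b) = tr w + tr b := map_add _ _ _
      rw [this, hw, hb]
      decide
  rw [card_F hk] at hsplit
  rw [← hbij] at hsplit
  have h2 : 2 * (ker0 k).card = 2 ^ k := by omega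
  have hk' : 2 ^ k = 2 * 2 ^ (k - 1) := by
    rw [← pow_succ']
    congr 1
    omega
  omega


lemma add_eq_zero' {a b : GaloisField 2 k} (h : a + b = 0) : a = b := by
  have := CharTwo.add_eq_iff_eq_add.mp h
  simpa using this

lemma phi_fiber (y u0 : GaloisField 2 k) (hu0 : u0 ^ 2 + u0 = y) :
    (univ.filter (fun u : GaloisField 2 k => u ^ 2 + u = y)) = {u0, u0 + 1} := by
  ext x
  simp only [mem_filter, mem_univ, true_and, mem_insert, mem_singleton]
  constructor
  · intro hx
    have hdiff : (x + u0) ^ 2 + (x + u0) = 0 := by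
      rw [CharTwo.add_sq]
      have h2 : x ^ 2 + u0 ^ 2 + (x + u0) = (x ^ 2 + x) + (u0 ^ 2 + u0) := by ring
      rw [h2, hx, hu0, CharTwo.add_self_eq_zero]
    have hfac : (x + u0) * ((x + u0) + 1) = 0 := by
      have h3 : (x + u0) * ((x + u0) + 1) = (x + u0) ^ 2 + (x + u0) := by ring
      rw [h3, hdiff]
    rcases mul_eq_zero.mp hfac with h1 | h1
    · left
      exact add_eq_zero' h1
    · right
      have h5 : x = 1 + u0 := CharTwo.add_eq_iff_eq_add.mp (add_eq_zero' h1)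
      rw [h5, add_comm]
  · intro hx
    rcases hx with h1 | h1
    · rw [h1]; exact hu0
    · rw [h1, CharTwo.add_sq]
      have h4 : u0 ^ 2 + 1 ^ 2 + (u0 + 1) = (u0 ^ 2 + u0) + (1 ^ 2 + 1) := by ring
      rw [h4, hu0, one_pow, CharTwo.add_self_eq_zero, add_zero]

lemma tr_add (a b : GaloisField 2 k) : tr (a + b) = tr a + tr b :=
  map_add (Algebra.trace (ZMod 2) (GaloisField 2 k)) a b

lemma tr_phi (u : GaloisField 2 k) : tr (u ^ 2 + u) = 0 := by
  rw [tr_add, tr_sq, CharTwo.add_self_eq_zero]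

lemma AS_image (hk : k ≠ 0) :
    univ.image (fun u : GaloisField 2 k => u ^ 2 + u) = ker0 k := by
  apply Finset.eq_of_subset_of_card_le
  · intro y hy
    simp only [mem_image, mem_univ, true_and] at hy
    obtain ⟨u, hu⟩ := hy
    simp only [ker0, mem_filter, mem_univ, true_and]
    rw [← hu]; exact tr_phi u
  · -- card ker0 ≤ card image
    rw [card_ker0 hk]
    have hcount := Finset.card_eq_sum_card_image (fun u : GaloisField 2 k => u ^ 2 + u) univ
    rw [Finset.card_univ, card_F hk] at hcount
    have hfib : ∀ y ∈ univ.image (fun u : GaloisField 2 k => u ^ 2 + u),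
        (univ.filter (fun u : GaloisField 2 k => u ^ 2 + u = y)).card = 2 := by
      intro y hy
      simp only [mem_image, mem_univ, true_and] at hy
      obtain ⟨u0, hu0⟩ := hy
      rw [phi_fiber y u0 hu0]
      rw [Finset.card_insert_of_notMem, Finset.card_singleton]
      simp only [mem_singleton]
      intro hcon
      have h01 : (0 : GaloisField 2 k) = 1 := by
        have h02 : u0 + 0 = u0 + 1 := by rw [add_zero]; exact hcon
        exact add_left_cancel h02
      exact zero_ne_one h01
    rw [Finset.sum_congr rfl hfib, Finset.sum_const, smul_eq_mul] at hcount
    have hpow : 2 ^ k = 2 ^ (k-1) * 2 := by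
      rw [← pow_succ]; congr 1; omega
    omega

lemma AS (hk : k ≠ 0) (v : GaloisField 2 k) :
    tr v = 0 ↔ ∃ u : GaloisField 2 k, u ^ 2 + u = v := by
  constructor
  · intro hv
    have hv' : v ∈ ker0 k := by simp [ker0, hv]
    rw [← AS_image hk] at hv'
    simp only [mem_image, mem_univ, true_and] at hv'
    exact hv'
  · rintro ⟨u, rfl⟩
    exact tr_phi u

/-- the linearized polynomial function computing the trace -/
noncomputable def Lf {k : ℕ} (w : GaloisField 2 k) : GaloisField 2 k :=
  ∑ i ∈ range k, w ^ (2 ^ i)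

lemma shift_sum (hk : k ≠ 0) (f : ℕ → GaloisField 2 k) (hf : f k = f 0) :
    ∑ i ∈ range k, f (i + 1) = ∑ i ∈ range k, f i := by
  have h1 := Finset.sum_range_succ' f k
  have h2 := Finset.sum_range_succ f k
  rw [h1, hf] at h2
  exact (add_right_cancel h2.symm).symm

lemma pow_card' (hk : k ≠ 0) (w : GaloisField 2 k) : w ^ (2 ^ k) = w := by
  have := FiniteField.pow_card w
  rwa [card_F hk] at this

lemma Lf_sq (hk : k ≠ 0) (w : GaloisField 2 k) : (Lf w) ^ 2 = Lf w := by
  rw [Lf, CharTwo.sum_sq]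
  have h1 : ∀ i ∈ range k, (w ^ 2 ^ i) ^ 2 = w ^ 2 ^ (i + 1) := by
    intro i _
    rw [← pow_mul, pow_succ]
  rw [Finset.sum_congr rfl h1]
  exact shift_sum hk (fun i => w ^ 2 ^ i) (by show _ ^ 2 ^ k = _ ^ 2 ^ 0; rw [pow_card' hk, pow_zero, pow_one])

lemma Lf_phi (hk : k ≠ 0) (u : GaloisField 2 k) : Lf (u ^ 2 + u) = 0 := by
  have hadd : ∀ i ∈ range k, (u ^ 2 + u) ^ 2 ^ i = (u ^ 2 ^ i) ^ 2 + u ^ 2 ^ i := by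
    intro i _
    rw [add_pow_char_pow, ← pow_mul, ← pow_mul, mul_comm 2 (2 ^ i), pow_mul]
  rw [Lf, Finset.sum_congr rfl hadd, Finset.sum_add_distrib]
  have h1 : ∀ i ∈ range k, (u ^ 2 ^ i) ^ 2 = u ^ 2 ^ (i + 1) := by
    intro i _
    rw [← pow_mul, pow_succ]
  rw [Finset.sum_congr rfl h1,
    shift_sum hk (fun i => u ^ 2 ^ i) (by show _ ^ 2 ^ k = _ ^ 2 ^ 0; rw [pow_card' hk, pow_zero, pow_one])]
  exact CharTwo.add_self_eq_zero _

noncomputable def Ppoly (k : ℕ) : Polynomial (GaloisField 2 k) :=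
  ∑ i ∈ range k, Polynomial.X ^ (2 ^ i)

lemma Ppoly_eval (w : GaloisField 2 k) : (Ppoly k).eval w = Lf w := by
  rw [Ppoly, Lf, Polynomial.eval_finset_sum]
  simp

lemma Ppoly_coeff (hk : k ≠ 0) : (Ppoly k).coeff (2 ^ (k - 1)) = 1 := by
  rw [Ppoly, Polynomial.finset_sum_coeff]
  have h1 : ∀ i ∈ range k,
      (Polynomial.X (R := GaloisField 2 k) ^ (2 ^ i)).coeff (2 ^ (k - 1))
      = if k - 1 = i then 1 else 0 := by
    intro i _
    rw [Polynomial.coeff_X_pow]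
    congr 1
    simp only [eq_iff_iff]
    constructor
    · intro hx
      exact (Nat.pow_right_injective (le_refl 2) hx.symm).symm
    · intro hx; rw [hx]
  rw [Finset.sum_congr rfl h1, Finset.sum_ite_eq (range k) (k - 1) (fun _ => (1 : GaloisField 2 k))]
  rw [if_pos (Finset.mem_range.mpr (by omega))]

lemma Ppoly_ne_zero (hk : k ≠ 0) : Ppoly k ≠ 0 := by
  intro hc
  have := Ppoly_coeff hk
  rw [hc] at this
  simp at this

lemma Ppoly_natDegree (hk : k ≠ 0) : (Ppoly k).natDegree ≤ 2 ^ (k - 1) := by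
  apply Polynomial.natDegree_sum_le_of_forall_le
  intro i hi
  rw [Polynomial.natDegree_X_pow]
  exact Nat.pow_le_pow_right (by norm_num) (by simp at hi; omega)

lemma card_Lf_zero (hk : k ≠ 0) :
    (univ.filter (fun w : GaloisField 2 k => Lf w = 0)).card ≤ 2 ^ (k - 1) := by
  have hsub : univ.filter (fun w : GaloisField 2 k => Lf w = 0)
      ⊆ (Ppoly k).roots.toFinset := by
    intro w hw
    simp only [mem_filter, mem_univ, true_and] at hw
    rw [Multiset.mem_toFinset, Polynomial.mem_roots (Ppoly_ne_zero hk)]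
    rw [Polynomial.IsRoot, Ppoly_eval]
    exact hw
  calc (univ.filter (fun w : GaloisField 2 k => Lf w = 0)).card
      ≤ (Ppoly k).roots.toFinset.card := Finset.card_le_card hsub
    _ ≤ Multiset.card (Ppoly k).roots := Multiset.toFinset_card_le _
    _ ≤ (Ppoly k).natDegree := (Ppoly k).card_roots'
    _ ≤ 2 ^ (k - 1) := Ppoly_natDegree hk

lemma Lf_of_tr_zero (hk : k ≠ 0) (v : GaloisField 2 k) (hv : tr v = 0) : Lf v = 0 := by
  obtain ⟨u, rfl⟩ := (AS hk v).mp hv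
  exact Lf_phi hk u

lemma Lf_of_tr_one (hk : k ≠ 0) (v : GaloisField 2 k) (hv : tr v = 1) : Lf v = 1 := by
  have h01 : Lf v = 0 ∨ Lf v = 1 := by
    have hs := Lf_sq hk v
    have : Lf v * (Lf v - 1) = 0 := by rw [mul_sub, mul_one, ← sq, hs, sub_self]
    rcases mul_eq_zero.mp this with h | h
    · left; exact h
    · right
      have := sub_eq_zero.mp h
      exact this
  rcases h01 with h | h
  · exfalso
    -- then ker0 ∪ {v} ⊆ Lf-zero set, contradiction with cards
    have hins : insert v (ker0 k) ⊆ univ.filter (fun w : GaloisField 2 k => Lf w = 0) := by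
      intro w hw
      rcases Finset.mem_insert.mp hw with h1 | h1
      · subst h1; simp only [mem_filter, mem_univ, true_and]; exact h
      · simp only [ker0, mem_filter, mem_univ, true_and] at h1 ⊢
        exact Lf_of_tr_zero hk w h1
    have hnotmem : v ∉ ker0 k := by
      simp only [ker0, mem_filter, mem_univ, true_and, hv]
      decide
    have hcard := Finset.card_le_card hins
    rw [Finset.card_insert_of_notMem hnotmem, card_ker0 hk] at hcard
    have := card_Lf_zero (k := k) hk
    omega
  · exact h

noncomputable def W (k : ℕ) : Finset (GaloisField 2 k) :=
  (univ.erase 0).filter (fun w => tr w = 0)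

lemma two_le_two_pow {i : ℕ} (hi : i ≠ 0) : 2 ≤ 2 ^ i := by
  calc 2 = 2 ^ 1 := (pow_one 2).symm
    _ ≤ 2 ^ i := Nat.pow_le_pow_right (by norm_num) (by omega)

lemma sum_nonzero_pow (hk : 3 ≤ k) (d : ℕ) (hd1 : 1 ≤ d) (hd2 : d < 2 ^ k - 1) :
    ∑ w ∈ univ.erase (0 : GaloisField 2 k), w ^ d = 0 := by
  rw [Finset.sum_erase _ (by rw [zero_pow (by omega)])]
  exact FiniteField.sum_pow_lt_card_sub_one (K := GaloisField 2 k) d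
    (by rw [card_F (by omega)]; omega)

lemma eight_le_two_pow (hk : 3 ≤ k) : 8 ≤ 2 ^ k := by
  calc (8:ℕ) = 2 ^ 3 := by norm_num
    _ ≤ 2 ^ k := Nat.pow_le_pow_right (by norm_num) hk

lemma sum_nonzero_id (hk : 3 ≤ k) :
    ∑ w ∈ univ.erase (0 : GaloisField 2 k), w = 0 := by
  have h := sum_nonzero_pow hk 1 le_rfl (by have := eight_le_two_pow hk; omega)
  simpa using h

lemma sum_nonzero_inv (hk : 3 ≤ k) :
    ∑ w ∈ univ.erase (0 : GaloisField 2 k), w⁻¹ = 0 := by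
  have key : ∑ w ∈ univ.erase (0 : GaloisField 2 k), w⁻¹
      = ∑ w ∈ univ.erase (0 : GaloisField 2 k), w := by
    refine Finset.sum_nbij' (i := fun w : GaloisField 2 k => w⁻¹)
      (j := fun w : GaloisField 2 k => w⁻¹) ?_ ?_ ?_ ?_ ?_
    · intro a ha
      simp only [Finset.mem_erase, Finset.mem_univ, and_true] at ha ⊢
      exact inv_ne_zero ha
    · intro a ha
      simp only [Finset.mem_erase, Finset.mem_univ, and_true] at ha ⊢
      exact inv_ne_zero ha
    · intro a _; exact inv_inv a
    · intro a _; exact inv_inv a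
    · intro a _; rfl
  rw [key, sum_nonzero_id hk]

lemma cast_card_nonzero (hk0 : k ≠ 0) : ((2 ^ k - 1 : ℕ) : GaloisField 2 k) = 1 := by
  obtain ⟨m, hm⟩ : ∃ m, 2 ^ k = 2 * m := ⟨2 ^ (k - 1), by rw [← pow_succ']; congr 1; omega⟩
  have h2 : 2 ≤ 2 ^ k := two_le_two_pow hk0
  have h3 : (2 ^ k - 1 : ℕ) = 2 * (m - 1) + 1 := by omega
  rw [h3, Nat.cast_add, Nat.cast_mul, Nat.cast_ofNat, Nat.cast_one,
    CharTwo.two_eq_zero (R := GaloisField 2 k), zero_mul, zero_add]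

lemma sum_inv_W (hk : 3 ≤ k) : ∑ w ∈ W k, w⁻¹ = 1 := by
  have hk0 : k ≠ 0 := by omega
  have step1 : ∑ w ∈ W k, w⁻¹
      = ∑ w ∈ univ.erase (0 : GaloisField 2 k), (1 + Lf w) * w⁻¹ := by
    rw [W, Finset.sum_filter]
    apply Finset.sum_congr rfl
    intro w _
    rcases zmod2_cases (tr w) with h | h
    · rw [if_pos h, Lf_of_tr_zero hk0 w h, add_zero, one_mul]
    · rw [if_neg (by rw [h]; decide), Lf_of_tr_one hk0 w h,
        CharTwo.add_self_eq_zero (1 : GaloisField 2 k), zero_mul]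
  rw [step1]
  have step2 : ∀ w ∈ univ.erase (0 : GaloisField 2 k),
      (1 + Lf w) * w⁻¹ = w⁻¹ + ∑ i ∈ range k, w ^ (2 ^ i) * w⁻¹ := by
    intro w _
    rw [add_mul, one_mul, Lf, Finset.sum_mul]
  rw [Finset.sum_congr rfl step2, Finset.sum_add_distrib, sum_nonzero_inv hk, zero_add]
  rw [Finset.sum_comm]
  rw [Finset.sum_eq_single 0]
  · -- i = 0 term
    have h1 : ∀ w ∈ univ.erase (0 : GaloisField 2 k), w ^ (2 ^ 0) * w⁻¹ = 1 := by
      intro w hw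
      simp only [Finset.mem_erase] at hw
      rw [pow_zero, pow_one, mul_inv_cancel₀ hw.1]
    rw [Finset.sum_congr rfl h1, Finset.sum_const, Finset.card_erase_of_mem (Finset.mem_univ _),
      Finset.card_univ, card_F hk0, nsmul_eq_mul, mul_one, cast_card_nonzero hk0]
  · intro i hi hi0
    have h2i : 2 ≤ 2 ^ i := two_le_two_pow hi0
    have h1 : ∀ w ∈ univ.erase (0 : GaloisField 2 k), w ^ (2 ^ i) * w⁻¹ = w ^ (2 ^ i - 1) := by
      intro w hw
      simp only [Finset.mem_erase] at hw
      have hsplit : w ^ (2 ^ i) = w ^ (2 ^ i - 1) * w := by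
        rw [← pow_succ]
        congr 1
        omega
      rw [hsplit, mul_assoc, mul_inv_cancel₀ hw.1, mul_one]
    rw [Finset.sum_congr rfl h1]
    apply sum_nonzero_pow hk
    · omega
    · have h3 : 2 ^ i < 2 ^ k := Nat.pow_lt_pow_right (by norm_num) (Finset.mem_range.mp hi)
      omega
  · intro h0
    exact absurd (Finset.mem_range.mpr (by omega)) h0

section Main

variable {α : GaloisField 2 k}

lemma eq_iff_add_eq_zero (a b : GaloisField 2 k) : a = b ↔ a + b = 0 := by
  constructor
  · rintro rfl; exact CharTwo.add_self_eq_zero a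
  · exact add_eq_zero'

/-- the fiber equation -/
lemma gx_eq_iff (hα : α ≠ 0) {x b : GaloisField 2 k} (hx : x ≠ 0) :
    x + (α * x)⁻¹ = b ↔ x ^ 2 + b * x + α⁻¹ = 0 := by
  have hmul : ∀ a c : GaloisField 2 k, a = c ↔ a * x = c * x :=
    fun a c => ⟨fun h => by rw [h], fun h => mul_right_cancel₀ hx h⟩
  have hexp : (x + (α * x)⁻¹) * x = x ^ 2 + α⁻¹ := by
    rw [add_mul, mul_inv, sq, mul_assoc, inv_mul_cancel₀ hx, mul_one]
  rw [hmul _ b, hexp, eq_iff_add_eq_zero]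
  have hcomm : x ^ 2 + α⁻¹ + b * x = x ^ 2 + b * x + α⁻¹ := by ring
  rw [hcomm]

lemma fiber_zero (hα : α ≠ 0) {x₀ : GaloisField 2 k} (hx₀ : x₀ ^ 2 = α⁻¹) :
    (univ.erase (0 : GaloisField 2 k)).filter (fun x => x + (α * x)⁻¹ = 0) = {x₀} := by
  have hx₀ne : x₀ ≠ 0 := by
    intro hcon
    rw [hcon] at hx₀
    exact inv_ne_zero hα (by rw [← hx₀]; ring)
  ext x
  simp only [mem_filter, mem_erase, mem_univ, true_and, and_true, mem_singleton]
  constructor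
  · rintro ⟨hxne, hfib⟩
    have h1 := (gx_eq_iff hα hxne).mp hfib
    rw [zero_mul, add_zero, ← hx₀] at h1
    have h2 : x ^ 2 = x₀ ^ 2 := by
      have := CharTwo.add_eq_iff_eq_add.mp h1
      simpa using this
    exact sq_bijective.1 h2
  · rintro rfl
    refine ⟨hx₀ne, ?_⟩
    rw [gx_eq_iff hα hx₀ne, zero_mul, add_zero, hx₀, CharTwo.add_self_eq_zero]

lemma fiber_pos (hα : α ≠ 0) {b z : GaloisField 2 k} (hb : b ≠ 0)
    (hz : z ^ 2 + z = α⁻¹ * (b⁻¹) ^ 2) :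
    (univ.erase (0 : GaloisField 2 k)).filter (fun x => x + (α * x)⁻¹ = b)
      = {b * z, b * z + b} := by
  have hvne : α⁻¹ * (b⁻¹) ^ 2 ≠ 0 :=
    mul_ne_zero (inv_ne_zero hα) (pow_ne_zero 2 (inv_ne_zero hb))
  have hzne : z ≠ 0 := by
    rintro rfl
    exact hvne (by rw [← hz]; ring)
  have hz1ne : z + 1 ≠ 0 := by
    intro hcon
    have hz1 : z = 1 := by simpa using add_eq_zero' hcon
    rw [hz1] at hz
    apply hvne
    rw [← hz, one_pow, CharTwo.add_self_eq_zero]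
  have hbv : b ^ 2 * (α⁻¹ * (b⁻¹) ^ 2) = α⁻¹ := by
    rw [mul_comm α⁻¹, ← mul_assoc, ← mul_pow, mul_inv_cancel₀ hb, one_pow, one_mul]
  have hz' : (z + 1) ^ 2 + (z + 1) = α⁻¹ * (b⁻¹) ^ 2 := by
    rw [CharTwo.add_sq, one_pow]
    have h5 : z ^ 2 + 1 + (z + 1) = z ^ 2 + z + (1 + 1) := by ring
    rw [h5, CharTwo.add_self_eq_zero (1 : GaloisField 2 k), add_zero]
    exact hz
  have hbb : b * (b⁻¹) ^ 2 = b⁻¹ := by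
    rw [sq, ← mul_assoc, mul_inv_cancel₀ hb, one_mul]
  ext x
  simp only [mem_filter, mem_erase, mem_univ, and_true, true_and, mem_insert, mem_singleton]
  constructor
  · rintro ⟨hxne, hfib⟩
    have heq := (gx_eq_iff hα hxne).mp hfib
    -- u := x * b⁻¹
    have h2 : (x * b⁻¹) ^ 2 + x * b⁻¹ + α⁻¹ * (b⁻¹) ^ 2
        = (x ^ 2 + b * x + α⁻¹) * (b⁻¹) ^ 2 := by
      have h3 : (x ^ 2 + b * x + α⁻¹) * (b⁻¹) ^ 2
          = x ^ 2 * (b⁻¹) ^ 2 + (b * (b⁻¹) ^ 2) * x + α⁻¹ * (b⁻¹) ^ 2 := by ring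
      rw [h3, hbb, mul_pow]; ring
    rw [heq, zero_mul] at h2
    have h4 : (x * b⁻¹) ^ 2 + x * b⁻¹ = α⁻¹ * (b⁻¹) ^ 2 := add_eq_zero' h2
    rw [← hz] at h4
    have hmem : x * b⁻¹ ∈ univ.filter (fun u : GaloisField 2 k => u ^ 2 + u = z ^ 2 + z) := by
      simp only [mem_filter, mem_univ, true_and]
      exact h4
    rw [phi_fiber (z ^ 2 + z) z rfl] at hmem
    have hxub : x * b⁻¹ * b = x := by
      rw [mul_assoc, inv_mul_cancel₀ hb, mul_one]
    rcases Finset.mem_insert.mp hmem with h6 | h6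
    · left
      rw [← hxub, h6, mul_comm]
    · right
      rw [← hxub, Finset.mem_singleton.mp h6]
      ring
  · intro hor
    have hcase : ∀ u : GaloisField 2 k, u ≠ 0 → u ^ 2 + u = α⁻¹ * (b⁻¹) ^ 2 →
        (b * u ≠ 0 ∧ (b * u) ^ 2 + b * (b * u) + α⁻¹ = 0) := by
      intro u hu huv
      refine ⟨mul_ne_zero hb hu, ?_⟩
      have h7 : (b * u) ^ 2 + b * (b * u) + α⁻¹ = b ^ 2 * (u ^ 2 + u) + α⁻¹ := by ring
      rw [h7, huv, hbv, CharTwo.add_self_eq_zero]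
    rcases hor with h6 | h6
    · obtain ⟨hne, heq⟩ := hcase z hzne hz
      rw [h6]
      exact ⟨hne, (gx_eq_iff hα hne).mpr heq⟩
    · obtain ⟨hne, heq⟩ := hcase (z + 1) hz1ne hz'
      have h8 : b * z + b = b * (z + 1) := by ring
      rw [h6, h8]
      exact ⟨hne, (gx_eq_iff hα hne).mpr heq⟩

lemma fiber_card_pos (hα : α ≠ 0) {b : GaloisField 2 k} (hb : b ≠ 0)
    (htr : tr (α⁻¹ * (b⁻¹) ^ 2) = 0) (hk0 : k ≠ 0) :
    ((univ.erase (0 : GaloisField 2 k)).filter (fun x => x + (α * x)⁻¹ = b)).card = 2 := by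
  obtain ⟨z, hz⟩ := (AS hk0 _).mp htr
  rw [fiber_pos hα hb hz]
  rw [Finset.card_insert_of_notMem, Finset.card_singleton]
  simp only [Finset.mem_singleton]
  intro hcon
  have h1 : b * z + 0 = b * z + b := by rw [add_zero]; exact hcon
  exact hb (add_left_cancel h1).symm

lemma fiber_card_empty (hα : α ≠ 0) {b : GaloisField 2 k} (hb : b ≠ 0)
    (htr : tr (α⁻¹ * (b⁻¹) ^ 2) = 1) :
    (univ.erase (0 : GaloisField 2 k)).filter (fun x => x + (α * x)⁻¹ = b) = ∅ := by
  rw [Finset.eq_empty_iff_forall_notMem]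
  intro x hx
  simp only [mem_filter, mem_erase, mem_univ, and_true, true_and] at hx
  obtain ⟨hxne, hfib⟩ := hx
  have heq := (gx_eq_iff hα hxne).mp hfib
  have hbb : b * (b⁻¹) ^ 2 = b⁻¹ := by
    rw [sq, ← mul_assoc, mul_inv_cancel₀ hb, one_mul]
  have h2 : (x * b⁻¹) ^ 2 + x * b⁻¹ + α⁻¹ * (b⁻¹) ^ 2
      = (x ^ 2 + b * x + α⁻¹) * (b⁻¹) ^ 2 := by
    have h3 : (x ^ 2 + b * x + α⁻¹) * (b⁻¹) ^ 2
        = x ^ 2 * (b⁻¹) ^ 2 + (b * (b⁻¹) ^ 2) * x + α⁻¹ * (b⁻¹) ^ 2 := by ring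
    rw [h3, hbb, mul_pow]; ring
  rw [heq, zero_mul] at h2
  have h4 : (x * b⁻¹) ^ 2 + x * b⁻¹ = α⁻¹ * (b⁻¹) ^ 2 := add_eq_zero' h2
  have h5 : tr (α⁻¹ * (b⁻¹) ^ 2) = 0 := by rw [← h4]; exact tr_phi _
  rw [htr] at h5
  exact one_ne_zero h5

lemma card_W (hk : 3 ≤ k) : (W k).card = 2 ^ (k - 1) - 1 := by
  have hk0 : k ≠ 0 := by omega
  rw [W, Finset.filter_erase]
  have h0 : (0 : GaloisField 2 k) ∈ univ.filter (fun w : GaloisField 2 k => tr w = 0) := by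
    simp only [mem_filter, mem_univ, true_and]
    exact map_zero _
  rw [Finset.card_erase_of_mem h0]
  rw [show (univ.filter (fun w : GaloisField 2 k => tr w = 0)) = ker0 k from rfl, card_ker0 hk0]

lemma chi_eval (v : ZMod 2) : (-1 : ℤ) ^ v.val = 1 - 2 * (v.val : ℤ) := by
  revert v; decide

lemma val_cast (v : ZMod 2) : ((v.val : ℕ) : ZMod 2) = v := by
  revert v; decide

end Main

end Klo

open Finset Klo in
theorem stmt_6 (k : ℕ) (hk : 3 ≤ k) (α : GaloisField 2 k)
    (h : (∑ x ∈ Finset.univ.erase (0 : GaloisField 2 k),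
        (-1 : ℤ) ^ ((Algebra.trace (ZMod 2) (GaloisField 2 k) (α * x + x⁻¹)).val)) = -1) :
    Algebra.trace (ZMod 2) (GaloisField 2 k) α = 0 := by
  have hk0 : k ≠ 0 := by omega
  by_cases hα : α = 0
  · rw [hα]
    exact map_zero _
  -- notation
  show tr α = 0
  obtain ⟨x₀, hx₀⟩ := sq_bijective.2 α⁻¹
  simp only at hx₀
  -- Step A: rewrite the summand
  have hA : ∀ x ∈ univ.erase (0 : GaloisField 2 k),
      (-1 : ℤ) ^ ((tr (α * x + x⁻¹)).val)
        = (-1 : ℤ) ^ ((tr (α * (x + (α * x)⁻¹))).val) := by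
    intro x hx
    have hxne : x ≠ 0 := (Finset.mem_erase.mp hx).1
    congr 2
    rw [mul_add, mul_inv, ← mul_assoc, mul_inv_cancel₀ hα, one_mul]
  have h1 : (∑ x ∈ univ.erase (0 : GaloisField 2 k),
      (-1 : ℤ) ^ ((tr (α * (x + (α * x)⁻¹))).val)) = -1 :=
    (Finset.sum_congr rfl hA).symm.trans h
  -- Step B: fiberwise summation
  have h2 := Finset.sum_fiberwise_of_maps_to' (s := univ.erase (0 : GaloisField 2 k))
    (t := univ) (g := fun x => x + (α * x)⁻¹)
    (fun x _ => Finset.mem_univ _) (fun b => (-1 : ℤ) ^ ((tr (α * b)).val))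
  rw [h1] at h2
  have h3 : ∀ b ∈ (univ : Finset (GaloisField 2 k)),
      (∑ x ∈ (univ.erase (0 : GaloisField 2 k)).filter (fun x => x + (α * x)⁻¹ = b),
        (-1 : ℤ) ^ ((tr (α * b)).val))
      = ((univ.erase (0 : GaloisField 2 k)).filter
          (fun x => x + (α * x)⁻¹ = b)).card • ((-1 : ℤ) ^ ((tr (α * b)).val)) := by
    intro b _
    rw [Finset.sum_const]
  rw [Finset.sum_congr rfl h3] at h2
  -- split off b = 0
  rw [← Finset.add_sum_erase univ _ (Finset.mem_univ (0 : GaloisField 2 k))] at h2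
  rw [fiber_zero hα hx₀, Finset.card_singleton, mul_zero,
    show tr (0 : GaloisField 2 k) = 0 from map_zero _] at h2
  simp only [ZMod.val_zero, pow_zero, one_smul] at h2
  -- rewrite the rest of the sum via the fiber cardinalities
  have h4 : ∀ b ∈ univ.erase (0 : GaloisField 2 k),
      ((univ.erase (0 : GaloisField 2 k)).filter
          (fun x => x + (α * x)⁻¹ = b)).card • ((-1 : ℤ) ^ ((tr (α * b)).val))
      = if tr (α⁻¹ * (b⁻¹) ^ 2) = 0 then 2 * ((-1 : ℤ) ^ ((tr (α * b)).val)) else 0 := by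
    intro b hb
    have hbne : b ≠ 0 := (Finset.mem_erase.mp hb).1
    rcases zmod2_cases (tr (α⁻¹ * (b⁻¹) ^ 2)) with htr | htr
    · rw [if_pos htr, fiber_card_pos hα hbne htr hk0]
      rw [two_smul, two_mul]
    · rw [if_neg (by rw [htr]; decide), fiber_card_empty hα hbne htr, Finset.card_empty,
        zero_smul]
  rw [Finset.sum_congr rfl h4, ← Finset.sum_filter] at h2
  set W' := (univ.erase (0 : GaloisField 2 k)).filter
    (fun b => tr (α⁻¹ * (b⁻¹) ^ 2) = 0) with hW'
  -- h2 : 1 + ∑ b ∈ W', 2 * χ(αb) = -1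
  have h5 : (∑ b ∈ W', (-1 : ℤ) ^ ((tr (α * b)).val)) = -1 := by
    rw [← Finset.mul_sum] at h2
    have : (2 : ℤ) * (∑ b ∈ W', (-1 : ℤ) ^ ((tr (α * b)).val)) = 2 * (-1) := by omega
    exact mul_left_cancel₀ (by norm_num) this
  -- bijection between W' and W k
  have hι : ∀ b ∈ W', α⁻¹ * (b⁻¹) ^ 2 ∈ W k := by
    intro b hb
    rw [hW'] at hb
    simp only [mem_filter, mem_erase, mem_univ, and_true, true_and] at hb
    rw [W]
    simp only [mem_filter, mem_erase, mem_univ, and_true, true_and]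
    exact ⟨mul_ne_zero (inv_ne_zero hα) (pow_ne_zero 2 (inv_ne_zero hb.1)), hb.2⟩
  have hinj : ((W' : Set (GaloisField 2 k))).InjOn (fun b => α⁻¹ * (b⁻¹) ^ 2) := by
    intro b1 _ b2 _ heq
    simp only at heq
    have h6 : (b1⁻¹) ^ 2 = (b2⁻¹) ^ 2 := mul_left_cancel₀ (inv_ne_zero hα) heq
    exact inv_injective (sq_bijective.1 h6)
  have hsurj : Set.SurjOn (fun b => α⁻¹ * (b⁻¹) ^ 2) (W' : Set (GaloisField 2 k))
      ((W k : Set (GaloisField 2 k))) := by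
    intro w hw
    rw [Finset.mem_coe, W] at hw
    simp only [mem_filter, mem_erase, mem_univ, and_true, true_and] at hw
    obtain ⟨s, hs⟩ := sq_bijective.2 (α * w)
    simp only at hs
    have hsne : s ≠ 0 := by
      intro hcon
      rw [hcon] at hs
      exact mul_ne_zero hα hw.1 (by rw [← hs]; ring)
    have hval : α⁻¹ * ((s⁻¹)⁻¹) ^ 2 = w := by
      rw [inv_inv, hs, ← mul_assoc, inv_mul_cancel₀ hα, one_mul]
    refine ⟨s⁻¹, ?_, hval⟩
    rw [Finset.mem_coe, hW']
    simp only [mem_filter, mem_erase, mem_univ, and_true, true_and]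
    refine ⟨inv_ne_zero hsne, ?_⟩
    rw [hval]
    exact hw.2
  have hcardW' : W'.card = 2 ^ (k - 1) - 1 := by
    rw [Finset.card_nbij (fun b => α⁻¹ * (b⁻¹) ^ 2) hι hinj hsurj, card_W hk]
  -- expand χ and compute N
  have h7 : ∀ b ∈ W', (-1 : ℤ) ^ ((tr (α * b)).val)
      = 1 - 2 * (((tr (α * b)).val : ℕ) : ℤ) := by
    intro b _
    exact chi_eval _
  rw [Finset.sum_congr rfl h7, Finset.sum_sub_distrib, Finset.sum_const, ← Finset.mul_sum,
    nsmul_eq_mul, mul_one, hcardW'] at h5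
  set N : ℕ := ∑ b ∈ W', (tr (α * b)).val with hN
  have hcast : ((2 ^ (k - 1) - 1 : ℕ) : ℤ) = 2 ^ (k - 1) - 1 := by
    have : (1 : ℕ) ≤ 2 ^ (k - 1) := Nat.one_le_two_pow
    push_cast [this]
    ring
  rw [← Nat.cast_sum] at h5
  rw [hcast] at h5
  -- h5 : 2^(k-1) - 1 - 2 * N = -1, hence 2 * N = 2^(k-1)
  have h8 : 2 * (N : ℤ) = 2 ^ (k - 1) := by omega
  have h9 : (N : ZMod 2) = 0 := by
    have h10 : 2 * N = 2 ^ (k - 1) := by exact_mod_cast h8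
    have hk3 : k - 1 = (k - 3) + 2 := by omega
    rw [hk3, pow_add] at h10
    have hm : N = 2 ^ (k - 3) * 2 := by
      have h11 : (2 : ℕ) ^ 2 = 4 := by norm_num
      rw [h11] at h10
      omega
    rw [hm, Nat.cast_mul, Nat.cast_ofNat, show ((2 : ZMod 2)) = 0 from by decide, mul_zero]
  -- transfer to ZMod 2
  have h12 : (N : ZMod 2) = ∑ b ∈ W', tr (α * b) := by
    rw [hN, Nat.cast_sum]
    exact Finset.sum_congr rfl (fun b _ => val_cast _)
  -- trace linearity
  have h13 : (∑ b ∈ W', tr (α * b)) = tr (α * ∑ b ∈ W', b) := by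
    rw [Finset.mul_sum]
    exact (map_sum (Algebra.trace (ZMod 2) (GaloisField 2 k)) _ _).symm
  -- sum over W' equals x₀
  have h14 : (∑ b ∈ W', b) = x₀ := by
    apply sq_bijective.1
    show (∑ b ∈ W', b) ^ 2 = x₀ ^ 2
    rw [CharTwo.sum_sq]
    have h15 : ∀ b ∈ W', b ^ 2 = α⁻¹ * (α⁻¹ * (b⁻¹) ^ 2)⁻¹ := by
      intro b hb
      rw [hW'] at hb
      simp only [mem_filter, mem_erase, mem_univ, and_true, true_and] at hb
      rw [mul_inv, inv_inv, inv_pow, inv_inv, ← mul_assoc, inv_mul_cancel₀ hα, one_mul]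
    rw [Finset.sum_congr rfl h15]
    rw [Finset.sum_nbij (i := fun b => α⁻¹ * (b⁻¹) ^ 2) hι hinj hsurj
      (g := fun w => α⁻¹ * w⁻¹) (fun b _ => rfl)]
    rw [← Finset.mul_sum, sum_inv_W hk, mul_one, hx₀]
  rw [h13, h14] at h12
  rw [h9] at h12
  -- conclusion
  have h16 : (α * x₀) ^ 2 = α := by
    rw [mul_pow, hx₀, sq, mul_assoc, mul_inv_cancel₀ hα, mul_one]
  rw [show tr α = tr ((α * x₀) ^ 2) from by rw [h16], tr_sq, ← h12]
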